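/- Let G be a locally compact Hausdorff group with left Haar measure ν, let φ ∈ Prob(G,ν), and set B = { _φf : f ∈ L^∞(G,ν), ‖f‖_{ν,∞} ≤ 1 }, where (_φf)(g) = ∫_G f(gx)φ(x) dν(x) (so B is an LUEB set). Then the map Δ(G) → Prob(G,ν), μ ↦ μφ := ∑_{g∈spt(μ)} μ(g)·(φ∘λ_{g⁻¹}), is G-left-equivariant, and for all μ, μ' ∈ Δ(G) one has ‖μφ − μ'φ‖_{ν,1} = p_B(μ − μ') = sup_{f∈L^∞(G,ν), ‖f‖_{ν,∞}≤1} |⟨μ − μ', _φf⟩|. -/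

import Mathlib

open Filter Topology MeasureTheory UniformConvergence

/-- `Δ(G)`: finitely supported probability densities on `G`. -/
def IsDelta {G : Type*} (μ : G → ℝ) : Prop :=
  (Function.support μ).Finite ∧ (∀ x, 0 ≤ μ x) ∧ ∑ᶠ x, μ x = 1

/-- The pairing `⟨μ, f⟩ = ∑ₓ μ(x) · f(x)`. -/
noncomputable def dpair {G : Type*} (μ f : G → ℝ) : ℝ := ∑ᶠ x, μ x * f x

/-- Left-translation action on densities: `(g · μ)(x) = μ(g⁻¹x)`. -/
def actD {G : Type*} [Group G] (g : G) (μ : G → ℝ) : G → ℝ := fun x => μ (g⁻¹ * x)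

/-- Action on functionals: `(g · ξ)(f) = ξ(f ∘ λ_g)`. -/
def actF {G : Type*} [Group G] (g : G) (ξ : (G → ℝ) → ℝ) : (G → ℝ) → ℝ :=
  fun f => ξ fun x => f (g * x)

/-- The functional `f ↦ ⟨μ, f⟩` associated with a density `μ`. -/
noncomputable def toFunc {G : Type*} (μ : G → ℝ) : (G → ℝ) → ℝ := fun f => dpair μ f

/-- Bounded right-uniformly continuous functions. -/
def IsRUCB {G : Type*} [Group G] [TopologicalSpace G] (f : G → ℝ) : Prop :=
  (∃ C : ℝ, ∀ x, |f x| ≤ C) ∧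
  ∀ ε > (0 : ℝ), ∃ U ∈ nhds (1 : G), ∀ u ∈ U, ∀ x : G, |f x - f (u * x)| ≤ ε

/-- RUEB sets: sup-norm bounded, right-uniformly equicontinuous. -/
def IsRUEB {G : Type*} [Group G] [TopologicalSpace G] (B : Set (G → ℝ)) : Prop :=
  (∃ C : ℝ, ∀ f ∈ B, ∀ x : G, |f x| ≤ C) ∧
  ∀ ε > (0 : ℝ), ∃ U ∈ nhds (1 : G), ∀ u ∈ U, ∀ f ∈ B, ∀ x : G, |f x - f (u * x)| ≤ ε

/-- Bounded left-uniformly continuous functions. -/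
def IsLUCB {G : Type*} [Group G] [TopologicalSpace G] (f : G → ℝ) : Prop :=
  (∃ C : ℝ, ∀ x, |f x| ≤ C) ∧
  ∀ ε > (0 : ℝ), ∃ U ∈ nhds (1 : G), ∀ u ∈ U, ∀ x : G, |f x - f (x * u)| ≤ ε

/-- LUEB sets: sup-norm bounded, left-uniformly equicontinuous. -/
def IsLUEB {G : Type*} [Group G] [TopologicalSpace G] (B : Set (G → ℝ)) : Prop :=
  (∃ C : ℝ, ∀ f ∈ B, ∀ x : G, |f x| ≤ C) ∧
  ∀ ε > (0 : ℝ), ∃ U ∈ nhds (1 : G), ∀ u ∈ U, ∀ f ∈ B, ∀ x : G, |f x - f (x * u)| ≤ ε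

/-- The UEB uniformity (uniform convergence on RUEB sets) on the space of
functionals on functions on `G`. -/
noncomputable def uebUniformityR (G : Type*) [Group G] [TopologicalSpace G] :
    UniformSpace ((G → ℝ) → ℝ) :=
  ⨅ (B : Set (G → ℝ)) (_ : IsRUEB B),
    UniformSpace.comap (fun ξ => UniformFun.ofFun fun f : B => ξ (f : G → ℝ))
      (UniformFun.uniformSpace (↥B) ℝ)

/-- The UEB topology associated with the right uniformity. -/
noncomputable def uebTopR (G : Type*) [Group G] [TopologicalSpace G] :
    TopologicalSpace ((G → ℝ) → ℝ) := (uebUniformityR G).toTopologicalSpace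

/-- `Mean_u(G_r)`: the UEB-closure of `Δ(G)` inside the functionals. -/
noncomputable def MeanUR (G : Type*) [Group G] [TopologicalSpace G] :
    Set ((G → ℝ) → ℝ) :=
  @closure _ (uebTopR G) (toFunc '' {μ : G → ℝ | IsDelta μ})

/-- The UEB uniformity (uniform convergence on LUEB sets). -/
noncomputable def uebUniformityL (G : Type*) [Group G] [TopologicalSpace G] :
    UniformSpace ((G → ℝ) → ℝ) :=
  ⨅ (B : Set (G → ℝ)) (_ : IsLUEB B),
    UniformSpace.comap (fun ξ => UniformFun.ofFun fun f : B => ξ (f : G → ℝ))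
      (UniformFun.uniformSpace (↥B) ℝ)

/-- The UEB topology associated with the left uniformity. -/
noncomputable def uebTopL (G : Type*) [Group G] [TopologicalSpace G] :
    TopologicalSpace ((G → ℝ) → ℝ) := (uebUniformityL G).toTopologicalSpace

/-- `Mean_u(G_ℓ)`: the UEB-closure of `Δ(G)`. -/
noncomputable def MeanUL (G : Type*) [Group G] [TopologicalSpace G] :
    Set ((G → ℝ) → ℝ) :=
  @closure _ (uebTopL G) (toFunc '' {μ : G → ℝ | IsDelta μ})

/-- Amenability of an action of a topological group on a topological space. -/
def AmenableAction {G : Type*} [Group G] [TopologicalSpace G]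
    {X : Type*} [TopologicalSpace X] (act : G → X → X) : Prop :=
  ∃ (ι : Type) (pι : Preorder ι) (_ : Nonempty ι)
    (_ : IsDirected ι fun a b => pι.le a b)
    (μ : ι → X → (G → ℝ) → ℝ),
    (∀ i x, μ i x ∈ MeanUR G) ∧
    (∀ i, @Continuous X ((G → ℝ) → ℝ) inferInstance (uebTopR G) (μ i)) ∧
    ∀ (g : G) (B : Set (G → ℝ)), IsRUEB B → ∀ ε > (0 : ℝ),
      ∃ i₀, ∀ i, pι.le i₀ i → ∀ x, ∀ f ∈ B,
        |actF g (μ i x) f - μ i (act g x) f| ≤ ε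

/-- Skew-amenability of an action. -/
def SkewAmenableAction {G : Type*} [Group G] [TopologicalSpace G]
    {X : Type*} [TopologicalSpace X] (act : G → X → X) : Prop :=
  ∃ (ι : Type) (pι : Preorder ι) (_ : Nonempty ι)
    (_ : IsDirected ι fun a b => pι.le a b)
    (μ : ι → X → (G → ℝ) → ℝ),
    (∀ i x, μ i x ∈ MeanUL G) ∧
    (∀ i, @Continuous X ((G → ℝ) → ℝ) inferInstance (uebTopL G) (μ i)) ∧
    ∀ (g : G) (B : Set (G → ℝ)), IsLUEB B → ∀ ε > (0 : ℝ),
      ∃ i₀, ∀ i, pι.le i₀ i → ∀ x, ∀ f ∈ B,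
        |actF g (μ i x) f - μ i (act g x) f| ≤ ε

/-- AD-amenability (Anantharaman-Delaroche) of an action of a locally compact
group, with respect to a left Haar measure `ν`. -/
def ADAmenableAction {G : Type*} [Group G] [TopologicalSpace G] [MeasurableSpace G]
    (ν : Measure G) {X : Type*} [TopologicalSpace X] (act : G → X → X) : Prop :=
  ∃ (ι : Type) (pι : Preorder ι) (_ : Nonempty ι)
    (_ : IsDirected ι fun a b => pι.le a b)
    (μ : ι → X → G → ℝ),
    (∀ i x, Integrable (μ i x) ν ∧ (∀ᵐ t ∂ν, 0 ≤ μ i x t) ∧ ∫ t, μ i x t ∂ν = 1) ∧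
    (∀ i (h : G → ℝ), Continuous h → Tendsto h (cocompact G) (nhds 0) →
      Continuous fun x => ∫ t, h t * μ i x t ∂ν) ∧
    ∀ K : Set G, IsCompact K → ∀ ε > (0 : ℝ),
      ∃ i₀, ∀ i, pι.le i₀ i → ∀ g ∈ K, ∀ x,
        ∫ t, |μ i x (g⁻¹ * t) - μ i (act g x) t| ∂ν ≤ ε

/-- Amenability of a topological group: a left-invariant mean on `RUCB(G)`. -/
def AmenableGroup (G : Type*) [Group G] [TopologicalSpace G] : Prop :=
  ∃ m : (G → ℝ) → ℝ,
    (∀ f h : G → ℝ, IsRUCB f → IsRUCB h → m (f + h) = m f + m h) ∧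
    (∀ (c : ℝ) (f : G → ℝ), IsRUCB f → m (c • f) = c * m f) ∧
    (∀ f : G → ℝ, IsRUCB f → (∀ x, 0 ≤ f x) → 0 ≤ m f) ∧
    m (fun _ => 1) = 1 ∧
    ∀ (g : G) (f : G → ℝ), IsRUCB f → m (fun x => f (g * x)) = m f

/-- Well-placed subgroups: there is an `H`-left-equivariant, right-uniformly
continuous map `G → Mean_u(H_r)` (uniform continuity spelled out via the basic
entourages of the right uniformity of `G` and the UEB pseudometrics). -/
def WellPlaced {G : Type*} [Group G] [TopologicalSpace G] (H : Subgroup G) : Prop :=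
  ∃ φ : G → ((↥H → ℝ) → ℝ),
    (∀ g, φ g ∈ MeanUR ↥H) ∧
    (∀ (h : ↥H) (g : G), φ ((h : G) * g) = actF h (φ g)) ∧
    ∀ B : Set (↥H → ℝ), IsRUEB B → ∀ ε > (0 : ℝ), ∃ U ∈ nhds (1 : G),
      ∀ x y : G, x * y⁻¹ ∈ U → ∀ f ∈ B, |φ x f - φ y f| ≤ ε

/-- Proposition 4.6: for `φ ∈ Prob(G,ν)`, the map `μ ↦ μφ` from `Δ(G)` to `Prob(G,ν)`
is `G`-left-equivariant and `‖μφ - μ'φ‖₁ = p_B(μ - μ')` for the LUEB set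
`B = {ₚf : ‖f‖_∞ ≤ 1}`. -/
theorem delta_convolution_isometry {G : Type*} [Group G] [TopologicalSpace G]
    [IsTopologicalGroup G] [LocallyCompactSpace G] [T2Space G]
    [MeasurableSpace G] [BorelSpace G]
    (ν : Measure G) [ν.IsHaarMeasure] (φ : G → ℝ) (hφint : Integrable φ ν)
    (hφpos : ∀ᵐ x ∂ν, 0 ≤ φ x) (hφone : ∫ x, φ x ∂ν = 1) :
    (∀ μ : G → ℝ, IsDelta μ →
      Integrable (fun x => ∑ᶠ g, μ g * φ (g⁻¹ * x)) ν ∧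
      (∀ᵐ x ∂ν, 0 ≤ ∑ᶠ g, μ g * φ (g⁻¹ * x)) ∧
      ∫ x, (∑ᶠ g, μ g * φ (g⁻¹ * x)) ∂ν = 1) ∧
    (∀ (g : G) (μ : G → ℝ), IsDelta μ →
      (fun x => ∑ᶠ h, actD g μ h * φ (h⁻¹ * x)) =
        fun x => ∑ᶠ h, μ h * φ (h⁻¹ * (g⁻¹ * x))) ∧
    ∀ μ μ' : G → ℝ, IsDelta μ → IsDelta μ' →
      ∫ x, |(∑ᶠ g, μ g * φ (g⁻¹ * x)) - ∑ᶠ g, μ' g * φ (g⁻¹ * x)| ∂ν =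
      sSup {r : ℝ | ∃ f : G → ℝ, AEStronglyMeasurable f ν ∧
        (∀ᵐ x ∂ν, |f x| ≤ 1) ∧

        r = |dpair (fun g => μ g - μ' g) (fun g => ∫ x, f (g * x) * φ x ∂ν)|} := by
  have hTint : ∀ g : G, Integrable (fun x => φ (g⁻¹ * x)) ν := fun g => hφint.comp_mul_left g⁻¹
  have hTone : ∀ g : G, ∫ x, φ (g⁻¹ * x) ∂ν = 1 := fun g => by
    rw [integral_mul_left_eq_self φ g⁻¹, hφone]
  have hTpos : ∀ g : G, ∀ᵐ x ∂ν, 0 ≤ φ (g⁻¹ * x) := fun g =>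
    (measurePreserving_mul_left ν g⁻¹).quasiMeasurePreserving.ae hφpos
  have hred : ∀ (μ : G → ℝ) (S : Finset G), Function.support μ ⊆ ↑S → ∀ x : G,
      (∑ᶠ g, μ g * φ (g⁻¹ * x)) = ∑ g ∈ S, μ g * φ (g⁻¹ * x) := by
    intro μ S hS x
    refine finsum_eq_finset_sum_of_support_subset _ ?_
    intro g hg
    have hg' : μ g ≠ 0 := by
      intro h; simp only [Function.mem_support, h, zero_mul, ne_eq, not_true_eq_false] at hg
    exact hS hg'
  refine ⟨?_, ?_, ?_⟩
  · intro μ hμ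
    obtain ⟨hfin, hpos, hsum⟩ := hμ
    set S := hfin.toFinset with hSdef
    have hS : Function.support μ ⊆ ↑S := fun g hg => hfin.mem_toFinset.2 hg
    have heq : (fun x => ∑ᶠ g, μ g * φ (g⁻¹ * x)) = fun x => ∑ g ∈ S, μ g * φ (g⁻¹ * x) :=
      funext (hred μ S hS)
    refine ⟨?_, ?_, ?_⟩
    · rw [heq]
      exact integrable_finset_sum _ fun g _ => (hTint g).const_mul (μ g)
    · have h := (ae_ball_iff S.countable_toSet).2 (fun g (_ : g ∈ (S : Set G)) => hTpos g)
      filter_upwards [h] with x hx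
      rw [hred μ S hS x]
      exact Finset.sum_nonneg fun g hg => mul_nonneg (hpos g) (hx g hg)
    · rw [heq, integral_finset_sum _ fun g _ => (hTint g).const_mul (μ g)]
      have h1 : ∀ g ∈ S, ∫ x, μ g * φ (g⁻¹ * x) ∂ν = μ g := fun g _ => by
        rw [integral_const_mul, hTone g, mul_one]
      rw [Finset.sum_congr rfl h1, ← finsum_eq_finset_sum_of_support_subset μ hS]
      exact hsum
  · intro g μ _
    funext x
    rw [← finsum_comp_equiv (Equiv.mulLeft g)
      (f := fun h => actD g μ h * φ (h⁻¹ * x))]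
    refine finsum_congr fun i => ?_
    simp [actD, mul_inv_rev, mul_assoc]
  · intro μ μ' hμ hμ'
    obtain ⟨hfin, hpos, hsum⟩ := hμ
    obtain ⟨hfin', hpos', hsum'⟩ := hμ'
    classical
    set c : G → ℝ := fun g => μ g - μ' g with hc
    set S : Finset G := hfin.toFinset ∪ hfin'.toFinset with hSdef
    have hSμ : Function.support μ ⊆ ↑S := fun g hg => by
      simp only [hSdef, Finset.coe_union, Set.mem_union, Set.Finite.coe_toFinset]
      exact Or.inl hg
    have hSμ' : Function.support μ' ⊆ ↑S := fun g hg => by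
      simp only [hSdef, Finset.coe_union, Set.mem_union, Set.Finite.coe_toFinset]
      exact Or.inr hg
    have hSc : Function.support c ⊆ ↑S := fun g hg => by
      simp only [Function.mem_support, hc] at hg
      by_cases h1 : μ g = 0
      · exact hSμ' fun h2 => hg (by rw [h1, h2, sub_zero])
      · exact hSμ h1
    set ψ : G → ℝ := fun y => ∑ g ∈ S, c g * φ (g⁻¹ * y) with hψdef
    have hψint : Integrable ψ ν := integrable_finset_sum _ fun g _ => (hTint g).const_mul (c g)
    have hpt : ∀ x, (∑ᶠ g, μ g * φ (g⁻¹ * x)) - (∑ᶠ g, μ' g * φ (g⁻¹ * x)) = ψ x := by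
      intro x
      rw [hred μ S hSμ x, hred μ' S hSμ' x, ← Finset.sum_sub_distrib]
      exact Finset.sum_congr rfl fun g _ => by simp only [hc]; ring
    have hkey : ∀ f : G → ℝ, AEStronglyMeasurable f ν → (∀ᵐ x ∂ν, |f x| ≤ 1) →
        dpair c (fun g => ∫ x, f (g * x) * φ x ∂ν) = ∫ y, f y * ψ y ∂ν := by
      intro f hf hfb
      have hfb' : ∀ᵐ x ∂ν, ‖f x‖ ≤ 1 := by simpa [Real.norm_eq_abs] using hfb
      have h1 : ∀ g : G, ∫ x, f (g * x) * φ x ∂ν = ∫ y, f y * φ (g⁻¹ * y) ∂ν := by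
        intro g
        have h := integral_mul_left_eq_self (μ := ν) (fun y => f y * φ (g⁻¹ * y)) g
        simpa [inv_mul_cancel_left] using h
      have hterm : ∀ g : G, Integrable (fun y => c g * (f y * φ (g⁻¹ * y))) ν := fun g =>
        ((hTint g).bdd_mul hf hfb').const_mul (c g)
      have hsupp : Function.support (fun g => c g * ∫ y, f y * φ (g⁻¹ * y) ∂ν) ⊆ ↑S := by
        intro g hg
        refine hSc ?_
        simp only [Function.mem_support] at hg ⊢
        intro h0; exact hg (by rw [h0, zero_mul])
      calc dpair c (fun g => ∫ x, f (g * x) * φ x ∂ν)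
          = ∑ g ∈ S, c g * ∫ y, f y * φ (g⁻¹ * y) ∂ν := by
            simp only [dpair]
            rw [show (fun g => c g * ∫ x, f (g * x) * φ x ∂ν)
                = fun g => c g * ∫ y, f y * φ (g⁻¹ * y) ∂ν from funext fun g => by rw [h1 g]]
            exact finsum_eq_finset_sum_of_support_subset _ hsupp
        _ = ∑ g ∈ S, ∫ y, c g * (f y * φ (g⁻¹ * y)) ∂ν :=
            Finset.sum_congr rfl fun g _ => (integral_const_mul _ _).symm
        _ = ∫ y, ∑ g ∈ S, c g * (f y * φ (g⁻¹ * y)) ∂ν :=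
            (integral_finset_sum _ fun g _ => hterm g).symm
        _ = ∫ y, f y * ψ y ∂ν := by
            refine integral_congr_ae (Filter.Eventually.of_forall fun y => ?_)
            simp only [hψdef]
            rw [Finset.mul_sum]
            exact Finset.sum_congr rfl fun g _ => by ring
    have hbound : ∀ f : G → ℝ, AEStronglyMeasurable f ν → (∀ᵐ x ∂ν, |f x| ≤ 1) →
        |∫ y, f y * ψ y ∂ν| ≤ ∫ y, |ψ y| ∂ν := by
      intro f hf hfb
      have hfψ : Integrable (fun y => f y * ψ y) ν :=
        hψint.bdd_mul hf (by simpa [Real.norm_eq_abs] using hfb)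
      calc |∫ y, f y * ψ y ∂ν| ≤ ∫ y, |f y * ψ y| ∂ν := by
            simpa only [Real.norm_eq_abs] using
              norm_integral_le_integral_norm (μ := ν) (fun y => f y * ψ y)
        _ ≤ ∫ y, |ψ y| ∂ν := by
            refine integral_mono_ae hfψ.abs hψint.abs ?_
            filter_upwards [hfb] with y hy
            rw [abs_mul]
            calc |f y| * |ψ y| ≤ 1 * |ψ y| := mul_le_mul_of_nonneg_right hy (abs_nonneg _)
              _ = |ψ y| := one_mul _
    have hψm := hψint.1
    set f₀ : G → ℝ := fun y => if 0 ≤ hψm.mk ψ y then 1 else -1 with hf₀def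
    have hf₀m : AEStronglyMeasurable f₀ ν := by
      have hm : Measurable f₀ :=
        Measurable.ite (measurableSet_le measurable_const hψm.measurable_mk)
          measurable_const measurable_const
      exact hm.aestronglyMeasurable
    have hf₀b : ∀ᵐ x ∂ν, |f₀ x| ≤ 1 := Filter.Eventually.of_forall fun x => by
      rw [hf₀def]
      by_cases h : 0 ≤ hψm.mk ψ x <;> simp [h]
    have hf₀ψ : ∀ᵐ y ∂ν, f₀ y * ψ y = |ψ y| := by
      filter_upwards [hψm.ae_eq_mk] with y hy
      rw [hf₀def]
      simp only
      rw [hy]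
      rcases le_or_gt 0 (hψm.mk ψ y) with h | h
      · rw [if_pos h, one_mul, abs_of_nonneg h]
      · rw [if_neg (not_le.2 h), abs_of_neg h]; ring
    have hIf₀ : ∫ y, f₀ y * ψ y ∂ν = ∫ y, |ψ y| ∂ν := integral_congr_ae hf₀ψ
    have hInn : (0 : ℝ) ≤ ∫ y, |ψ y| ∂ν := integral_nonneg fun y => abs_nonneg _
    have hgoal : ∫ x, |(∑ᶠ g, μ g * φ (g⁻¹ * x)) - ∑ᶠ g, μ' g * φ (g⁻¹ * x)| ∂ν
        = ∫ y, |ψ y| ∂ν := by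
      refine integral_congr_ae (Filter.Eventually.of_forall fun x => ?_)
      show |(∑ᶠ g, μ g * φ (g⁻¹ * x)) - ∑ᶠ g, μ' g * φ (g⁻¹ * x)| = |ψ x|
      rw [hpt x]
    rw [hgoal]
    have hmem : (∫ y, |ψ y| ∂ν) ∈ {r : ℝ | ∃ f : G → ℝ, AEStronglyMeasurable f ν ∧
        (∀ᵐ x ∂ν, |f x| ≤ 1) ∧
        r = |dpair c (fun g => ∫ x, f (g * x) * φ x ∂ν)|} := by
      refine ⟨f₀, hf₀m, hf₀b, ?_⟩
      rw [hkey f₀ hf₀m hf₀b, hIf₀, abs_of_nonneg hInn]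
    have hub : ∀ r ∈ {r : ℝ | ∃ f : G → ℝ, AEStronglyMeasurable f ν ∧
        (∀ᵐ x ∂ν, |f x| ≤ 1) ∧
        r = |dpair c (fun g => ∫ x, f (g * x) * φ x ∂ν)|}, r ≤ ∫ y, |ψ y| ∂ν := by
      rintro r ⟨f, hf, hfb, rfl⟩
      rw [hkey f hf hfb]
      exact hbound f hf hfb
    exact le_antisymm (le_csSup ⟨_, hub⟩ hmem) (csSup_le ⟨_, hmem⟩ hub)
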